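/- Let p1, p0, q1, q0 : ℝ × ℝ → ℝ be arbitrary functions and define f(x,y,z) = z² + p1(x,y)·z + p0(x,y) and g(x,y,z) = z² + q1(x,y)·z + q0(x,y). Then the image under the projection Π(x,y,z) = (x,y) of the set {(x,y,z) ∈ ℝ³ : f(x,y,z) = 0 and g(x,y,z) = 0} is exactly the set {(x,y) ∈ ℝ² : S0(x,y) = 0, Δ1(x,y) ≥ 0, Δ2(x,y) ≥ 0}, where S0(x,y) = (p0(x,y) − q0(x,y))² − (p1(x,y) − q1(x,y))·(p0(x,y)·q1(x,y) − q0(x,y)·p1(x,y)), Δ1(x,y) = p1(x,y)² − 4·p0(x,y) and Δ2(x,y) = q1(x,y)² − 4·q0(x,y). -/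

import Mathlib

/-- The projection onto the (x,y)-plane of the intersection of the two quadrics
    f = z² + p1(x,y)z + p0(x,y) and g = z² + q1(x,y)z + q0(x,y) is exactly the
    set where the resultant S0 vanishes and both discriminants are nonnegative. -/
theorem stmt_0 (p1 p0 q1 q0 : ℝ × ℝ → ℝ) :
    (fun w : ℝ × ℝ × ℝ => (w.1, w.2.1)) ''
      {w : ℝ × ℝ × ℝ |
        w.2.2 ^ 2 + p1 (w.1, w.2.1) * w.2.2 + p0 (w.1, w.2.1) = 0 ∧
        w.2.2 ^ 2 + q1 (w.1, w.2.1) * w.2.2 + q0 (w.1, w.2.1) = 0} =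
    {v : ℝ × ℝ |
        (p0 v - q0 v) ^ 2 - (p1 v - q1 v) * (p0 v * q1 v - q0 v * p1 v) = 0 ∧
        p1 v ^ 2 - 4 * p0 v ≥ 0 ∧
        q1 v ^ 2 - 4 * q0 v ≥ 0} := by
  ext ⟨x, y⟩
  simp only [Set.mem_image, Set.mem_setOf_eq, Prod.exists, Prod.mk.injEq]
  constructor
  · rintro ⟨a, b, z, ⟨h1, h2⟩, rfl, rfl⟩
    refine ⟨?_, ?_, ?_⟩
    · linear_combination
        ((p1 (a, b) - q1 (a, b))^2 -
          ((p1 (a, b) - q1 (a, b))*z + q0 (a, b) - p0 (a, b) + p1 (a, b)^2 -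
            p1 (a, b)*q1 (a, b))) * h1 +
        ((p1 (a, b) - q1 (a, b))*z + q0 (a, b) - p0 (a, b) + p1 (a, b)^2 -
          p1 (a, b)*q1 (a, b)) * h2
    · nlinarith [sq_nonneg (2*z + p1 (a, b)), h1]
    · nlinarith [sq_nonneg (2*z + q1 (a, b)), h2]
  · rintro ⟨hS, hd1, hd2⟩
    by_cases hac : p1 (x, y) = q1 (x, y)
    · have hsq : (p0 (x, y) - q0 (x, y))^2 = 0 := by
        linear_combination hS + (p0 (x, y) * q1 (x, y) - q0 (x, y) * p1 (x, y)) * hac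
      have hbd : p0 (x, y) = q0 (x, y) :=
        sub_eq_zero.mp (pow_eq_zero_iff two_ne_zero |>.mp hsq)
      refine ⟨x, y, (-p1 (x, y) + Real.sqrt (p1 (x, y)^2 - 4*p0 (x, y)))/2,
        ⟨?_, ?_⟩, rfl, rfl⟩
      · linear_combination (Real.sq_sqrt hd1) / 4
      · rw [← hac, ← hbd]
        linear_combination (Real.sq_sqrt hd1) / 4
    · have h0 : p1 (x, y) - q1 (x, y) ≠ 0 := sub_ne_zero.mpr hac
      refine ⟨x, y, (q0 (x, y) - p0 (x, y))/(p1 (x, y) - q1 (x, y)),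
        ⟨?_, ?_⟩, rfl, rfl⟩ <;>
      · field_simp
        linear_combination hS
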